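/- In the complex reflection group G(m,p,n) with 1 < p < m and n ≥ 2, the diagonal element g = diag(ζ, ζ^{p−1}, 1, …, 1), where ζ = e^{2πi/m}, has codim(g) = 2 and reflection length ℓ(g) = 3. -/

import Mathlib

open Module Matrix

noncomputable section

/-- The primitive m-th root of unity e^{2πi/m}. -/
def zeta (m : ℕ) : ℂ := Complex.exp (2 * Real.pi * Complex.I / m)

/-- codim of a matrix: n minus the dimension of its fixed space. -/
def codimM {n : ℕ} (M : Matrix (Fin n) (Fin n) ℂ) : ℕ :=
  n - finrank ℂ (LinearMap.ker (M.mulVecLin - LinearMap.id))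

/-- Membership in the monomial reflection group G(m,p,n): a monomial matrix with
entries m-th roots of unity whose nonzero entries multiply to an (m/p)-th root of unity. -/
def InG (m p n : ℕ) (M : Matrix (Fin n) (Fin n) ℂ) : Prop :=
  ∃ (σ : Equiv.Perm (Fin n)) (d : Fin n → ℂ),
    (∀ j, d j ^ m = 1) ∧ ((∏ j, d j) ^ (m / p) = 1) ∧
    ∀ i j, M i j = if i = σ j then d j else 0

/-- A reflection of G(m,p,n): a nonidentity element of the group fixing a hyperplane
pointwise (i.e. of codimension one). -/
def IsReflM (m p n : ℕ) (M : Matrix (Fin n) (Fin n) ℂ) : Prop :=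
  InG m p n M ∧ M ≠ 1 ∧ codimM M = 1

/-- Reflection length in G(m,p,n). -/
def reflLenM (m p n : ℕ) (M : Matrix (Fin n) (Fin n) ℂ) : ℕ :=
  sInf {k | ∃ l : List (Matrix (Fin n) (Fin n) ℂ),
    (∀ s ∈ l, IsReflM m p n s) ∧ l.length = k ∧ l.prod = M}

/-- Transposition-type reflection: swaps coordinates i and j scaling by ζ^a and ζ^{-a}. -/
def IsTranspRefl (m n : ℕ) (M : Matrix (Fin n) (Fin n) ℂ) : Prop :=
  ∃ (i j : Fin n) (c : ℂ), i ≠ j ∧ c ^ m = 1 ∧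
    M = Matrix.of (fun k l =>
      if k = i ∧ l = j then c
      else if k = j ∧ l = i then c⁻¹
      else if k = l ∧ k ≠ i ∧ k ≠ j then 1 else 0)

/-- The codimension order relation on matrices. -/
def codimLeM {n : ℕ} (a c : Matrix (Fin n) (Fin n) ℂ) : Prop :=
  codimM a + codimM (a⁻¹ * c) = codimM c


lemma zeta_pow_m {m : ℕ} (hm : 0 < m) : zeta m ^ m = 1 := by
  rw [zeta, ← Complex.exp_nat_mul]
  have hm0 : (m : ℂ) ≠ 0 := Nat.cast_ne_zero.mpr hm.ne'
  have : (m : ℂ) * (2 * Real.pi * Complex.I / m) = 2 * Real.pi * Complex.I := by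
    field_simp
  rw [this, Complex.exp_two_pi_mul_I]

lemma zeta_pow_ne_one {m k : ℕ} (hk0 : 0 < k) (hkm : k < m) : zeta m ^ k ≠ 1 := by
  intro h
  have hm : 0 < m := lt_trans hk0 hkm
  rw [zeta, ← Complex.exp_nat_mul, Complex.exp_eq_one_iff] at h
  obtain ⟨z, hz⟩ := h
  have hm0 : (m : ℂ) ≠ 0 := Nat.cast_ne_zero.mpr hm.ne'
  have h2 : (2 * (Real.pi:ℂ) * Complex.I) ≠ 0 := by
    simp [Real.pi_ne_zero, Complex.I_ne_zero, Complex.ofReal_ne_zero]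
  have hkc : (k : ℂ) = z * m := by
    field_simp at hz
    have h' : (k:ℂ) * (2 * Real.pi * Complex.I) = ((z:ℂ) * m) * (2 * Real.pi * Complex.I) := by
      linear_combination (2 * (Real.pi:ℂ) * Complex.I) * hz
    exact mul_right_cancel₀ h2 h'
  have hkz : (k : ℤ) = z * m := by exact_mod_cast hkc
  have hk0' : (0:ℤ) < k := by exact_mod_cast hk0
  have hkm' : (k:ℤ) < m := by exact_mod_cast hkm
  have hm' : (0:ℤ) < m := by exact_mod_cast hm
  rcases le_or_gt z 0 with hzn | hzp
  · nlinarith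
  · have : 1 ≤ z := hzp
    nlinarith

lemma zeta_ne_zero {m : ℕ} (hm : 0 < m) : zeta m ≠ 0 := by
  intro h
  have := zeta_pow_m hm
  rw [h, zero_pow hm.ne'] at this
  exact zero_ne_one this

lemma mem_fixedKer {n : ℕ} (M : Matrix (Fin n) (Fin n) ℂ) (v : Fin n → ℂ) :
    v ∈ LinearMap.ker (M.mulVecLin - LinearMap.id) ↔ M.mulVec v = v := by
  rw [LinearMap.mem_ker, LinearMap.sub_apply, LinearMap.id_apply, Matrix.mulVecLin_apply,
    sub_eq_zero]

lemma finrank_ker_one {n : ℕ} (i0 i1 : Fin n) (h : i0 ≠ i1) (c : ℂ)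
    (S : Submodule ℂ (Fin n → ℂ)) (hS : ∀ v, v ∈ S ↔ v i0 = c * v i1) :
    finrank ℂ S = n - 1 := by
  set f : (Fin n → ℂ) →ₗ[ℂ] ℂ := LinearMap.proj i0 - c • LinearMap.proj i1 with hf
  have hfapp : ∀ v, f v = v i0 - c * v i1 := fun v => rfl
  have hker : S = LinearMap.ker f := by
    ext v
    rw [hS, LinearMap.mem_ker, hfapp, sub_eq_zero]
  have hsurj : Function.Surjective f := by
    intro a
    refine ⟨Pi.single i0 a, ?_⟩
    rw [hfapp, Pi.single_eq_same, Pi.single_eq_of_ne h.symm, mul_zero, sub_zero]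
  have h1 := LinearMap.finrank_range_add_finrank_ker f
  rw [LinearMap.range_eq_top.mpr hsurj, finrank_top] at h1
  simp only [Module.finrank_self, Module.finrank_pi, Fintype.card_fin] at h1
  rw [hker]
  omega

lemma finrank_ker_two {n : ℕ} (i0 i1 : Fin n) (h : i0 ≠ i1)
    (S : Submodule ℂ (Fin n → ℂ)) (hS : ∀ v, v ∈ S ↔ (v i0 = 0 ∧ v i1 = 0)) :
    finrank ℂ S = n - 2 := by
  set f : (Fin n → ℂ) →ₗ[ℂ] ℂ × ℂ := (LinearMap.proj i0).prod (LinearMap.proj i1) with hf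
  have hfapp : ∀ v, f v = (v i0, v i1) := fun v => rfl
  have hker : S = LinearMap.ker f := by
    ext v
    rw [hS, LinearMap.mem_ker, hfapp, Prod.mk_eq_zero]
  have hsurj : Function.Surjective f := by
    rintro ⟨a, b⟩
    refine ⟨Pi.single i0 a + Pi.single i1 b, ?_⟩
    rw [hfapp]
    simp [Pi.single_eq_same, Pi.single_eq_of_ne h.symm, Pi.single_eq_of_ne h]
  have h1 := LinearMap.finrank_range_add_finrank_ker f
  rw [LinearMap.range_eq_top.mpr hsurj, finrank_top] at h1
  simp only [Module.finrank_prod, Module.finrank_self, Module.finrank_pi, Fintype.card_fin] at h1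
  rw [hker]
  omega

lemma perm_fix_cases {n : ℕ} (σ : Equiv.Perm (Fin n)) (i0 i1 : Fin n) (h01 : i0 ≠ i1)
    (hfix : ∀ j, j ≠ i0 → j ≠ i1 → σ j = j) :
    (σ i0 = i0 ∧ σ i1 = i1) ∨ (σ i0 = i1 ∧ σ i1 = i0) := by
  have key : ∀ i, i = i0 ∨ i = i1 → σ i = i0 ∨ σ i = i1 := by
    intro i _
    by_contra hcon
    push_neg at hcon
    have := hfix (σ i) hcon.1 hcon.2
    have := σ.injective this
    rcases ‹i = i0 ∨ i = i1› with rfl | rfl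
    · exact hcon.1 this
    · exact hcon.2 this
  rcases key i0 (Or.inl rfl) with h0 | h0
  · left
    refine ⟨h0, ?_⟩
    rcases key i1 (Or.inr rfl) with h1 | h1
    · exact absurd (σ.injective (h1.trans h0.symm)) (Ne.symm h01)
    · exact h1
  · right
    refine ⟨h0, ?_⟩
    rcases key i1 (Or.inr rfl) with h1 | h1
    · exact h1
    · exact absurd (σ.injective (h1.trans h0.symm)) h01.symm

lemma mono_mul_apply {n : ℕ} (A : Matrix (Fin n) (Fin n) ℂ) (σ2 : Equiv.Perm (Fin n))
    (d2 : Fin n → ℂ) (B : Matrix (Fin n) (Fin n) ℂ)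
    (hB : ∀ i j, B i j = if i = σ2 j then d2 j else 0) (i j : Fin n) :
    (A * B) i j = A i (σ2 j) * d2 j := by
  rw [Matrix.mul_apply, Finset.sum_eq_single (σ2 j)]
  · rw [hB, if_pos rfl]
  · intro k _ hk
    rw [hB, if_neg (by exact fun hc => hk (by rw [hc])), mul_zero]
  · intro hc
    exact absurd (Finset.mem_univ _) hc

lemma mono_mulVec_apply {n : ℕ} (σ : Equiv.Perm (Fin n)) (d : Fin n → ℂ)
    (B : Matrix (Fin n) (Fin n) ℂ)
    (hB : ∀ i j, B i j = if i = σ j then d j else 0) (v : Fin n → ℂ) (i : Fin n) :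
    B.mulVec v i = d (σ.symm i) * v (σ.symm i) := by
  rw [Matrix.mulVec, dotProduct, Finset.sum_eq_single (σ.symm i)]
  · rw [hB, if_pos (by simp)]
  · intro k _ hk
    rw [hB, if_neg, zero_mul]
    intro hc
    exact hk (by rw [hc, Equiv.symm_apply_apply])
  · intro hc
    exact absurd (Finset.mem_univ _) hc
lemma mul_eq_self_iff_of_ne_one (a x : ℂ) (ha : a ≠ 1) : a * x = x ↔ x = 0 := by
  constructor
  · intro h
    have h2 : (a - 1) * x = 0 := by ring_nf; linear_combination h
    rcases mul_eq_zero.1 h2 with h3 | h3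
    · exact absurd (sub_eq_zero.1 h3) ha
    · exact h3
  · rintro rfl; rw [mul_zero]

lemma prod_two {n : ℕ} (d : Fin n → ℂ) (i0 i1 : Fin n) (h01 : i0 ≠ i1)
    (htail : ∀ j, j ≠ i0 → j ≠ i1 → d j = 1) :
    ∏ j, d j = d i0 * d i1 := by
  rw [← Finset.prod_pair h01]
  symm
  apply Finset.prod_subset (Finset.subset_univ _)
  intro x _ hx
  simp only [Finset.mem_insert, Finset.mem_singleton] at hx
  push_neg at hx
  exact htail x hx.1 hx.2
lemma isRefl_diag (m p n : ℕ) (hm : 0 < m) (i0 i1 : Fin n) (h01 : i0 ≠ i1) (c : ℂ)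
    (hc : c ^ m = 1) (hcp : c ^ (m / p) = 1) (hc1 : c ≠ 1) :
    IsReflM m p n (Matrix.diagonal (fun i => if i = i0 then c else 1)) := by
  set d : Fin n → ℂ := fun i => if i = i0 then c else 1 with hd
  have hdi0 : d i0 = c := by simp [hd]
  have hdi1 : d i1 = 1 := by simp [hd, h01.symm]
  refine ⟨⟨1, d, ?_, ?_, ?_⟩, ?_, ?_⟩
  · intro j
    by_cases h : j = i0 <;> simp [hd, h, hc]
  · rw [prod_two d i0 i1 h01 (fun j hj0 _ => by simp [hd, hj0])]
    rw [hdi0, hdi1, mul_one, hcp]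
  · intro i j
    show Matrix.diagonal d i j = if i = j then d j else 0
    by_cases h : i = j
    · subst h; rw [Matrix.diagonal_apply_eq, if_pos rfl]
    · rw [Matrix.diagonal_apply_ne _ h, if_neg h]
  · intro hcon
    have := congrFun (congrFun hcon i0) i0
    rw [Matrix.diagonal_apply_eq, Matrix.one_apply_eq] at this
    rw [hdi0] at this
    exact hc1 this
  · unfold codimM
    have hker : ∀ v, v ∈ LinearMap.ker ((Matrix.diagonal d).mulVecLin - LinearMap.id) ↔
        v i0 = 0 * v i1 := by
      intro v
      rw [mem_fixedKer, zero_mul]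
      constructor
      · intro h
        have h0 := congrFun h i0
        rw [Matrix.mulVec_diagonal] at h0
        rw [hdi0] at h0
        exact (mul_eq_self_iff_of_ne_one c (v i0) hc1).1 h0
      · intro h0
        ext i
        rw [Matrix.mulVec_diagonal]
        by_cases h : i = i0
        · subst h; rw [h0, mul_zero]
        · simp [hd, h]
    rw [finrank_ker_one i0 i1 h01 0 _ hker]
    have : 0 < n := i0.pos
    omega

lemma isRefl_swap (m p n : ℕ) (hm : 0 < m) (i0 i1 : Fin n) (h01 : i0 ≠ i1) (c0 c1 : ℂ)
    (hc0 : c0 ^ m = 1) (hc1 : c1 ^ m = 1) (hcc : c0 * c1 = 1) :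
    IsReflM m p n (Matrix.of fun i j => if i = Equiv.swap i0 i1 j then
      (if j = i0 then c0 else if j = i1 then c1 else 1) else 0) := by
  set d : Fin n → ℂ := fun j => if j = i0 then c0 else if j = i1 then c1 else 1 with hd
  have hdi0 : d i0 = c0 := by simp [hd]
  have hdi1 : d i1 = c1 := by simp [hd, h01.symm]
  set M : Matrix (Fin n) (Fin n) ℂ :=
    Matrix.of fun i j => if i = Equiv.swap i0 i1 j then d j else 0 with hM
  have hrep : ∀ i j, M i j = if i = Equiv.swap i0 i1 j then d j else 0 := fun i j => rfl
  show IsReflM m p n M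
  refine ⟨⟨Equiv.swap i0 i1, d, ?_, ?_, ?_⟩, ?_, ?_⟩
  · intro j
    by_cases h : j = i0
    · simp [hd, h, hc0]
    · by_cases h' : j = i1
      · simp [hd, h, h', h01.symm, hc1]
      · simp [hd, h, h']
  · rw [prod_two d i0 i1 h01 (fun j hj0 hj1 => by simp [hd, hj0, hj1])]
    rw [hdi0, hdi1, hcc, one_pow]
  · exact hrep
  · intro hcon
    have := congrFun (congrFun hcon i0) i0
    rw [hrep, Matrix.one_apply_eq, Equiv.swap_apply_left, if_neg h01] at this
    exact zero_ne_one this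
  · unfold codimM
    have hmv : ∀ (v : Fin n → ℂ) i, M.mulVec v i =
        d (Equiv.swap i0 i1 i) * v (Equiv.swap i0 i1 i) := by
      intro v i
      rw [mono_mulVec_apply (Equiv.swap i0 i1) d M hrep, Equiv.symm_swap]
    have hker : ∀ v, v ∈ LinearMap.ker (M.mulVecLin - LinearMap.id) ↔
        v i0 = c1 * v i1 := by
      intro v
      rw [mem_fixedKer, funext_iff]
      constructor
      · intro h
        have h0 := h i0
        rw [hmv, Equiv.swap_apply_left] at h0
        rw [hdi1] at h0
        exact h0.symm
      · intro h0 i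
        rw [hmv]
        by_cases h : i = i0
        · subst h
          rw [Equiv.swap_apply_left]
          rw [hdi1]
          exact h0.symm
        · by_cases h' : i = i1
          · subst h'
            rw [Equiv.swap_apply_right]
            rw [hdi0, h0, ← mul_assoc, hcc, one_mul]
          · rw [Equiv.swap_apply_of_ne_of_ne h h']
            simp [hd, h, h']
    rw [finrank_ker_one i0 i1 h01 c1 _ hker]
    have : 0 < n := i0.pos
    omega
theorem gmpn_length_ne_codim (m p n : ℕ) (hp1 : 1 < p) (hpm : p < m) (hdvd : p ∣ m)
    (hn : 2 ≤ n) (g : Matrix (Fin n) (Fin n) ℂ)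
    (hg : g = Matrix.diagonal (fun i : Fin n =>
      if i = ⟨0, by omega⟩ then zeta m
      else if i = ⟨1, by omega⟩ then zeta m ^ (p - 1) else 1)) :
    codimM g = 2 ∧ reflLenM m p n g = 3 := by
  have hm : 0 < m := by omega
  obtain ⟨i0, i1, h01, hgw⟩ : ∃ i0 i1 : Fin n, i0 ≠ i1 ∧
      g = Matrix.diagonal (fun i : Fin n =>
        if i = i0 then zeta m else if i = i1 then zeta m ^ (p - 1) else 1) :=
    ⟨⟨0, by omega⟩, ⟨1, by omega⟩, by simp [Fin.ext_iff], hg⟩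
  set w : Fin n → ℂ := fun i => if i = i0 then zeta m else if i = i1 then zeta m ^ (p - 1) else 1
    with hw
  -- scalar facts
  have hz1 : zeta m ≠ 1 := by
    have := zeta_pow_ne_one (m := m) (k := 1) one_pos (by omega)
    rwa [pow_one] at this
  have hzp1 : zeta m ^ (p - 1) ≠ 1 := zeta_pow_ne_one (by omega) (by omega)
  have hz0 : zeta m ≠ 0 := zeta_ne_zero hm
  have hzm : zeta m ^ m = 1 := zeta_pow_m hm
  have hmp1 : 0 < m / p := Nat.div_pos (le_of_lt hpm) (by omega)
  have hmp2 : m / p < m := Nat.div_lt_self (by omega) hp1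
  have hpmp : p * (m / p) = m := Nat.mul_div_cancel' hdvd
  have hzmp : zeta m ^ (m / p) ≠ 1 := zeta_pow_ne_one hmp1 hmp2
  have hzp : zeta m ^ p ≠ 1 := zeta_pow_ne_one (by omega) hpm
  have hwi0 : w i0 = zeta m := by simp [hw]
  have hwi1 : w i1 = zeta m ^ (p - 1) := by simp [hw, h01.symm]
  have hwo : ∀ j, j ≠ i0 → j ≠ i1 → w j = 1 := by intro j hj0 hj1; simp [hw, hj0, hj1]
  -- the fixed space of g
  have hVg : ∀ v, v ∈ LinearMap.ker (g.mulVecLin - LinearMap.id) ↔ (v i0 = 0 ∧ v i1 = 0) := by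
    intro v
    rw [mem_fixedKer, hgw, funext_iff]
    constructor
    · intro h
      constructor
      · have h0 := h i0
        rw [Matrix.mulVec_diagonal, hwi0] at h0
        exact (mul_eq_self_iff_of_ne_one _ _ hz1).1 h0
      · have h1 := h i1
        rw [Matrix.mulVec_diagonal, hwi1] at h1
        exact (mul_eq_self_iff_of_ne_one _ _ hzp1).1 h1
    · rintro ⟨h0, h1⟩ i
      rw [Matrix.mulVec_diagonal]
      by_cases hi : i = i0
      · rw [hi, h0, mul_zero]
      · by_cases hi' : i = i1
        · rw [hi', h1, mul_zero]
        · rw [hwo i hi hi', one_mul]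
  have hfVg : finrank ℂ (LinearMap.ker (g.mulVecLin - LinearMap.id)) = n - 2 :=
    finrank_ker_two i0 i1 h01 _ hVg
  have hcodg : codimM g = 2 := by unfold codimM; rw [hfVg]; omega
  refine ⟨hcodg, ?_⟩
  -- the three reflections for the upper bound
  set dr : Fin n → ℂ := fun i => if i = i0 then zeta m ^ p else 1 with hdr
  set e : Fin n → ℂ := fun j => if j = i0 then zeta m ^ (p - 1)
    else if j = i1 then zeta m ^ (m + 1 - p) else 1 with he
  set r : Matrix (Fin n) (Fin n) ℂ := Matrix.diagonal dr with hrdef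
  set t1 : Matrix (Fin n) (Fin n) ℂ := Matrix.of fun i j =>
    if i = Equiv.swap i0 i1 j then (if j = i0 then zeta m ^ (p - 1)
      else if j = i1 then zeta m ^ (m + 1 - p) else 1) else 0 with ht1def
  set t2 : Matrix (Fin n) (Fin n) ℂ := Matrix.of fun i j =>
    if i = Equiv.swap i0 i1 j then (if j = i0 then (1:ℂ) else if j = i1 then 1 else 1) else 0
    with ht2def
  have hr : IsReflM m p n r := by
    apply isRefl_diag m p n hm i0 i1 h01
    · rw [← pow_mul, mul_comm, pow_mul, hzm, one_pow]
    · rw [← pow_mul, hpmp, hzm]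
    · exact hzp
  have hpow1 : (zeta m ^ (p - 1)) ^ m = 1 := by
    rw [← pow_mul, mul_comm, pow_mul, hzm, one_pow]
  have hpow2 : (zeta m ^ (m + 1 - p)) ^ m = 1 := by
    rw [← pow_mul, mul_comm, pow_mul, hzm, one_pow]
  have hpow3 : zeta m ^ (p - 1) * zeta m ^ (m + 1 - p) = 1 := by
    rw [← pow_add]
    have : p - 1 + (m + 1 - p) = m := by omega
    rw [this, hzm]
  have ht1 : IsReflM m p n t1 :=
    isRefl_swap m p n hm i0 i1 h01 _ _ hpow1 hpow2 hpow3
  have ht2 : IsReflM m p n t2 :=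
    isRefl_swap m p n hm i0 i1 h01 1 1 (one_pow m) (one_pow m) (mul_one 1)
  have hrepT1 : ∀ i j, t1 i j = if i = Equiv.swap i0 i1 j then e j else 0 := fun i j => rfl
  have hrepT2 : ∀ i j, t2 i j = if i = Equiv.swap i0 i1 j then (1:ℂ) else 0 := by
    intro i j
    show (if i = Equiv.swap i0 i1 j then (if j = i0 then (1:ℂ) else if j = i1 then 1 else 1)
      else 0) = _
    by_cases h : i = Equiv.swap i0 i1 j <;> simp [h]
  have hprod3 : ([r, t1, t2] : List (Matrix (Fin n) (Fin n) ℂ)).prod = g := by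
    rw [List.prod_cons, List.prod_cons, List.prod_singleton]
    have ht12 : ∀ i j, (t1 * t2) i j = if i = j then e (Equiv.swap i0 i1 j) else 0 := by
      intro i j
      rw [mono_mul_apply t1 (Equiv.swap i0 i1) (fun _ => 1) t2 hrepT2, mul_one, hrepT1,
        Equiv.swap_apply_self]
    ext i j
    rw [hgw, hrdef, Matrix.diagonal_mul, ht12]
    by_cases hij : i = j
    · subst hij
      rw [Matrix.diagonal_apply_eq, if_pos rfl]
      by_cases hi : i = i0
      · rw [hi, Equiv.swap_apply_left]
        have h1 : dr i0 = zeta m ^ p := by simp [hdr]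
        have h2 : e i1 = zeta m ^ (m + 1 - p) := by simp [he, h01.symm]
        rw [hwi0, h1, h2, ← pow_add]
        have h3 : p + (m + 1 - p) = m + 1 := by omega
        rw [h3, pow_succ, hzm, one_mul]
      · by_cases hi' : i = i1
        · rw [hi', Equiv.swap_apply_right]
          have h1 : dr i1 = 1 := by simp [hdr, h01.symm]
          have h2 : e i0 = zeta m ^ (p - 1) := by simp [he]
          rw [hwi1, h1, h2, one_mul]
        · rw [Equiv.swap_apply_of_ne_of_ne hi hi', hwo i hi hi']
          have h1 : dr i = 1 := by simp [hdr, hi]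
          have h2 : e i = 1 := by simp [he, hi, hi']
          rw [h1, h2, one_mul]
    · rw [Matrix.diagonal_apply_ne _ hij, if_neg hij, mul_zero]
  have h3mem : 3 ∈ {k | ∃ l : List (Matrix (Fin n) (Fin n) ℂ),
      (∀ s ∈ l, IsReflM m p n s) ∧ l.length = 3 ∧ l.prod = g} := by
    refine ⟨[r, t1, t2], ?_, rfl, hprod3⟩
    intro s hs
    simp only [List.mem_cons, List.not_mem_nil, or_false] at hs
    rcases hs with rfl | rfl | rfl
    · exact hr
    · exact ht1
    · exact ht2
  have hlow : ∀ k ∈ {k | ∃ l : List (Matrix (Fin n) (Fin n) ℂ),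
      (∀ s ∈ l, IsReflM m p n s) ∧ l.length = k ∧ l.prod = g}, 3 ≤ k := by
    rintro k ⟨l, hrefl, hlen, hprod⟩
    by_contra hklt
    push_neg at hklt
    rcases l with _ | ⟨s1, l⟩
    · rw [List.prod_nil] at hprod
      have hcf := congrFun (congrFun hprod i0) i0
      rw [Matrix.one_apply_eq, hgw, Matrix.diagonal_apply_eq, hwi0] at hcf
      exact hz1 hcf.symm
    rcases l with _ | ⟨s2, l⟩
    · rw [List.prod_singleton] at hprod
      have hs1 := hrefl s1 (by simp)
      rw [hprod] at hs1
      have h1 := hs1.2.2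
      rw [hcodg] at h1
      exact absurd h1 (by omega)
    rcases l with _ | ⟨s3, l⟩
    swap
    · simp only [List.length_cons] at hlen; omega
    · -- the two-reflection case
      simp only [List.length_cons, List.length_nil] at hlen
      have hs1 := hrefl s1 (by simp)
      have hs2 := hrefl s2 (by simp)
      obtain ⟨⟨σ1, d1, hd1m, hd1p, hrep1⟩, hne1, hcod1⟩ := hs1
      obtain ⟨⟨σ2, d2, hd2m, hd2p, hrep2⟩, hne2, hcod2⟩ := hs2
      rw [List.prod_cons, List.prod_singleton] at hprod
      have hle1 : finrank ℂ (LinearMap.ker (s1.mulVecLin - LinearMap.id)) ≤ n := by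
        have := Submodule.finrank_le (LinearMap.ker (s1.mulVecLin - LinearMap.id))
        simpa [Module.finrank_pi] using this
      have hle2 : finrank ℂ (LinearMap.ker (s2.mulVecLin - LinearMap.id)) ≤ n := by
        have := Submodule.finrank_le (LinearMap.ker (s2.mulVecLin - LinearMap.id))
        simpa [Module.finrank_pi] using this
      unfold codimM at hcod1 hcod2
      have hf1 : finrank ℂ (LinearMap.ker (s1.mulVecLin - LinearMap.id)) = n - 1 := by omega
      have hf2 : finrank ℂ (LinearMap.ker (s2.mulVecLin - LinearMap.id)) = n - 1 := by omega
      have hinfle : (LinearMap.ker (s1.mulVecLin - LinearMap.id) ⊓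
          LinearMap.ker (s2.mulVecLin - LinearMap.id)) ≤
          LinearMap.ker (g.mulVecLin - LinearMap.id) := by
        intro v hv
        obtain ⟨hv1, hv2⟩ := Submodule.mem_inf.1 hv
        rw [mem_fixedKer] at hv1 hv2
        rw [mem_fixedKer, ← hprod, ← Matrix.mulVec_mulVec, hv2, hv1]
      have hsup : finrank ℂ ((LinearMap.ker (s1.mulVecLin - LinearMap.id)) ⊔
          (LinearMap.ker (s2.mulVecLin - LinearMap.id)) : Submodule ℂ (Fin n → ℂ)) ≤ n := by
        have := Submodule.finrank_le ((LinearMap.ker (s1.mulVecLin - LinearMap.id)) ⊔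
          (LinearMap.ker (s2.mulVecLin - LinearMap.id)) : Submodule ℂ (Fin n → ℂ))
        simpa [Module.finrank_pi] using this
      have hinffr := Submodule.finrank_sup_add_finrank_inf_eq
        (LinearMap.ker (s1.mulVecLin - LinearMap.id))
        (LinearMap.ker (s2.mulVecLin - LinearMap.id))
      have heq : (LinearMap.ker (s1.mulVecLin - LinearMap.id) ⊓
          LinearMap.ker (s2.mulVecLin - LinearMap.id)) =
          LinearMap.ker (g.mulVecLin - LinearMap.id) :=
        Submodule.eq_of_le_of_finrank_le hinfle (by rw [hfVg]; omega)
      have hVgK1 : LinearMap.ker (g.mulVecLin - LinearMap.id) ≤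
          LinearMap.ker (s1.mulVecLin - LinearMap.id) := by
        rw [← heq]; exact inf_le_left
      have hVgK2 : LinearMap.ker (g.mulVecLin - LinearMap.id) ≤
          LinearMap.ker (s2.mulVecLin - LinearMap.id) := by
        rw [← heq]; exact inf_le_right
      have key : ∀ (s : Matrix (Fin n) (Fin n) ℂ) (σ : Equiv.Perm (Fin n)) (d : Fin n → ℂ),
          (∀ j, d j ^ m = 1) → (∀ i j, s i j = if i = σ j then d j else 0) →
          LinearMap.ker (g.mulVecLin - LinearMap.id) ≤
            LinearMap.ker (s.mulVecLin - LinearMap.id) →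
          ∀ j, j ≠ i0 → j ≠ i1 → σ j = j ∧ d j = 1 := by
        intro s σ d hdm hrep hle j hj0 hj1
        have hsing : (Pi.single j 1 : Fin n → ℂ) ∈
            LinearMap.ker (g.mulVecLin - LinearMap.id) := by
          rw [hVg]
          exact ⟨Pi.single_eq_of_ne (Ne.symm hj0) 1, Pi.single_eq_of_ne (Ne.symm hj1) 1⟩
        have hfix := (mem_fixedKer _ _).1 (hle hsing)
        rw [Matrix.mulVec_single] at hfix
        have hσ : σ j = j := by
          by_contra hc
          have h1 := congrFun hfix (σ j)
          simp only [Pi.smul_apply, Matrix.col_apply, op_smul_eq_mul] at h1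
          rw [hrep, if_pos rfl, mul_one, Pi.single_eq_of_ne hc] at h1
          have h2 := hdm j
          rw [h1, zero_pow hm.ne'] at h2
          exact zero_ne_one h2
        refine ⟨hσ, ?_⟩
        have h1 := congrFun hfix j
        simp only [Pi.smul_apply, Matrix.col_apply, op_smul_eq_mul] at h1
        rw [hrep, if_pos hσ.symm, mul_one, Pi.single_eq_same] at h1
        exact h1
      have hkey1 := key s1 σ1 d1 hd1m hrep1 hVgK1
      have hkey2 := key s2 σ2 d2 hd2m hrep2 hVgK2
      have hperm1 := perm_fix_cases σ1 i0 i1 h01 (fun j a b => (hkey1 j a b).1)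
      have hperm2 := perm_fix_cases σ2 i0 i1 h01 (fun j a b => (hkey2 j a b).1)
      have hprodE : ∀ j : Fin n, g j j = s1 j (σ2 j) * d2 j := fun j => by
        rw [← hprod]; exact mono_mul_apply s1 σ2 d2 s2 hrep2 j j
      have hg00 : g i0 i0 = zeta m := by rw [hgw, Matrix.diagonal_apply_eq, hwi0]
      have hg11 : g i1 i1 = zeta m ^ (p - 1) := by rw [hgw, Matrix.diagonal_apply_eq, hwi1]
      have exactone : ∀ (s : Matrix (Fin n) (Fin n) ℂ) (σ : Equiv.Perm (Fin n)) (d : Fin n → ℂ),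
          (∀ i j, s i j = if i = σ j then d j else 0) → s ≠ 1 →
          finrank ℂ (LinearMap.ker (s.mulVecLin - LinearMap.id)) = n - 1 →
          (∀ j, σ j = j) → (∀ j, j ≠ i0 → j ≠ i1 → d j = 1) →
          (d i0 = 1 ∧ d i1 ≠ 1) ∨ (d i0 ≠ 1 ∧ d i1 = 1) := by
        intro s σ d hrep hne hfr hid htail
        have hmv : ∀ (v : Fin n → ℂ) (i : Fin n), s.mulVec v i = d i * v i := by
          intro v i
          rw [mono_mulVec_apply σ d s hrep]
          have hsy : σ.symm i = i := by rw [Equiv.symm_apply_eq, hid]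
          rw [hsy]
        by_cases h0 : d i0 = 1 <;> by_cases h1 : d i1 = 1
        · exfalso
          apply hne
          have hall : ∀ j, d j = 1 := by
            intro j
            by_cases hj : j = i0; · rwa [hj]
            by_cases hj' : j = i1; · rwa [hj']
            exact htail j hj hj'
          ext i j
          rw [hrep, hid j, hall j, Matrix.one_apply]
        · exact Or.inl ⟨h0, h1⟩
        · exact Or.inr ⟨h0, h1⟩
        · exfalso
          have hker : ∀ v, v ∈ LinearMap.ker (s.mulVecLin - LinearMap.id) ↔
              (v i0 = 0 ∧ v i1 = 0) := by
            intro v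
            rw [mem_fixedKer, funext_iff]
            constructor
            · intro h
              exact ⟨(mul_eq_self_iff_of_ne_one _ _ h0).1 (by rw [← hmv v i0]; exact h i0),
                     (mul_eq_self_iff_of_ne_one _ _ h1).1 (by rw [← hmv v i1]; exact h i1)⟩
            · rintro ⟨hv0, hv1⟩ i
              rw [hmv]
              by_cases hj : i = i0; · rw [hj, hv0, mul_zero]
              by_cases hj' : i = i1; · rw [hj', hv1, mul_zero]
              rw [htail i hj hj', one_mul]
          have h2 := finrank_ker_two i0 i1 h01 _ hker
          omega
      have swapkey : ∀ (s : Matrix (Fin n) (Fin n) ℂ) (σ : Equiv.Perm (Fin n)) (d : Fin n → ℂ),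
          (∀ i j, s i j = if i = σ j then d j else 0) →
          finrank ℂ (LinearMap.ker (s.mulVecLin - LinearMap.id)) = n - 1 →
          σ i0 = i1 → σ i1 = i0 → (∀ j, j ≠ i0 → j ≠ i1 → σ j = j ∧ d j = 1) →
          d i0 * d i1 = 1 := by
        intro s σ d hrep hfr hs0 hs1 htail
        by_contra hcc
        have hsymm0 : σ.symm i0 = i1 := by rw [Equiv.symm_apply_eq, hs1]
        have hsymm1 : σ.symm i1 = i0 := by rw [Equiv.symm_apply_eq, hs0]
        have hsymmo : ∀ j, j ≠ i0 → j ≠ i1 → σ.symm j = j := fun j a b => by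
          rw [Equiv.symm_apply_eq, (htail j a b).1]
        have hker : ∀ v, v ∈ LinearMap.ker (s.mulVecLin - LinearMap.id) ↔
            (v i0 = 0 ∧ v i1 = 0) := by
          intro v
          rw [mem_fixedKer, funext_iff]
          constructor
          · intro h
            have h0 := h i0
            rw [mono_mulVec_apply σ d s hrep, hsymm0] at h0
            have h1 := h i1
            rw [mono_mulVec_apply σ d s hrep, hsymm1] at h1
            have hv1 : v i1 = 0 := by
              have h2 : (d i0 * d i1 - 1) * v i1 = 0 := by linear_combination d i0 * h0 + h1
              rcases mul_eq_zero.1 h2 with hx | hx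
              · exact absurd (sub_eq_zero.1 hx) hcc
              · exact hx
            have hv0 : v i0 = 0 := by rw [← h0, hv1, mul_zero]
            exact ⟨hv0, hv1⟩
          · rintro ⟨hv0, hv1⟩ i
            rw [mono_mulVec_apply σ d s hrep]
            by_cases hj : i = i0
            · rw [hj, hsymm0, hv1, hv0, mul_zero]
            by_cases hj' : i = i1
            · rw [hj', hsymm1, hv0, hv1, mul_zero]
            rw [hsymmo i hj hj', (htail i hj hj').2, one_mul]
        have h2 := finrank_ker_two i0 i1 h01 _ hker
        omega
      rcases hperm1 with ⟨ha1, hb1⟩ | ⟨ha1, hb1⟩ <;>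
        rcases hperm2 with ⟨ha2, hb2⟩ | ⟨ha2, hb2⟩
      · -- both diagonal
        have hσ1 : ∀ j, σ1 j = j := by
          intro j
          by_cases h : j = i0; · rw [h, ha1]
          by_cases h' : j = i1; · rw [h', hb1]
          exact (hkey1 j h h').1
        have hσ2 : ∀ j, σ2 j = j := by
          intro j
          by_cases h : j = i0; · rw [h, ha2]
          by_cases h' : j = i1; · rw [h', hb2]
          exact (hkey2 j h h').1
        have hd1t : ∀ j, j ≠ i0 → j ≠ i1 → d1 j = 1 := fun j a b => (hkey1 j a b).2
        have hd2t : ∀ j, j ≠ i0 → j ≠ i1 → d2 j = 1 := fun j a b => (hkey2 j a b).2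
        have hex1 := exactone s1 σ1 d1 hrep1 hne1 hf1 hσ1 hd1t
        have hex2 := exactone s2 σ2 d2 hrep2 hne2 hf2 hσ2 hd2t
        have he00 : zeta m = d1 i0 * d2 i0 := by
          rw [← hg00, hprodE i0, ha2, hrep1, if_pos ha1.symm]
        have he11 : zeta m ^ (p - 1) = d1 i1 * d2 i1 := by
          rw [← hg11, hprodE i1, hb2, hrep1, if_pos hb1.symm]
        have hq1 : (d1 i0 * d1 i1) ^ (m / p) = 1 := by
          rw [← prod_two d1 i0 i1 h01 hd1t]; exact hd1p
        have hq2 : (d2 i0 * d2 i1) ^ (m / p) = 1 := by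
          rw [← prod_two d2 i0 i1 h01 hd2t]; exact hd2p
        rcases hex1 with ⟨h10, h11⟩ | ⟨h10, h11⟩ <;> rcases hex2 with ⟨h20, h21⟩ | ⟨h20, h21⟩
        · apply hz1; rw [he00, h10, h20, one_mul]
        · apply hzmp
          have hd20 : d2 i0 = zeta m := by rw [he00, h10, one_mul]
          rw [h21, mul_one, hd20] at hq2
          exact hq2
        · apply hzmp
          have hd10 : d1 i0 = zeta m := by rw [he00, h20, mul_one]
          rw [h11, mul_one, hd10] at hq1
          exact hq1
        · apply hzp1; rw [he11, h11, h21, one_mul]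
      · -- mixed: σ1 diagonal, σ2 swap
        have h2 := hprodE i0
        rw [hg00, ha2, hrep1, if_neg (by rw [hb1]; exact h01), zero_mul] at h2
        exact hz0 h2
      · -- mixed: σ1 swap, σ2 diagonal
        have h2 := hprodE i0
        rw [hg00, ha2, hrep1, if_neg (by rw [ha1]; exact h01), zero_mul] at h2
        exact hz0 h2
      · -- both swap
        have hcc1 := swapkey s1 σ1 d1 hrep1 hf1 ha1 hb1 hkey1
        have hcc2 := swapkey s2 σ2 d2 hrep2 hf2 ha2 hb2 hkey2
        have he00 : zeta m = d1 i1 * d2 i0 := by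
          rw [← hg00, hprodE i0, ha2, hrep1, if_pos hb1.symm]
        have he11 : zeta m ^ (p - 1) = d1 i0 * d2 i1 := by
          rw [← hg11, hprodE i1, hb2, hrep1, if_pos ha1.symm]
        apply hzp
        have hps : zeta m ^ p = zeta m * zeta m ^ (p - 1) := by
          rw [← pow_succ']
          congr 1
          omega
        rw [hps, he11, he00]
        calc d1 i1 * d2 i0 * (d1 i0 * d2 i1) = (d1 i0 * d1 i1) * (d2 i0 * d2 i1) := by ring
          _ = 1 := by rw [hcc1, hcc2, one_mul]
  unfold reflLenM
  exact le_antisymm (Nat.sInf_le h3mem) (le_csInf ⟨3, h3mem⟩ hlow)
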